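/- Let T ∈ B(H) and N ∈ B(K) where H is a closed subspace of K. If P_H N|_H = T and P_H N*N|_H = T*T, then H is invariant under N and N|_H = T (i.e., N is an extension of T). -/

import Mathlib

open scoped InnerProductSpace ComplexOrder

/-- If `P_H N|_H = T` and `P_H N*N|_H = T*T`, then `H` is invariant under `N`
and `N` restricted to `H` equals `T`, i.e. `N` is an extension of `T`. -/
theorem normal_like_extension
    {K : Type*} [NormedAddCommGroup K] [InnerProductSpace ℂ K] [CompleteSpace K]
    (H : Submodule ℂ K) [CompleteSpace H]
    (T : H →L[ℂ] H) (N : K →L[ℂ] K)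
    (h1 : ∀ h : H, H.orthogonalProjection (N h) = T h)
    (h2 : ∀ h : H, H.orthogonalProjection ((star N) (N h)) = (star T) (T h)) :
    ∀ h : H, N h ∈ H ∧ N h = (T h : K) := by
  intro h
  set a : K := N h with ha
  set b : K := (T h : K) with hb
  have e1 : ⟪a, a⟫_ℂ = ⟪b, b⟫_ℂ := by
    have : ⟪(star N) (N (h : K)), (h : K)⟫_ℂ = ⟪N (h : K), N (h : K)⟫_ℂ := by
      rw [ContinuousLinearMap.star_eq_adjoint, ContinuousLinearMap.adjoint_inner_left]
    rw [ha, ← this]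
    have := Submodule.inner_orthogonalProjection_eq_of_mem_right (K := H) h ((star N) (N (h : K)))
    rw [h2 h] at this
    rw [← this, hb, ← Submodule.coe_inner]
    have : ⟪(star T) (T h), h⟫_ℂ = ⟪T h, T h⟫_ℂ := by
      rw [ContinuousLinearMap.star_eq_adjoint, ContinuousLinearMap.adjoint_inner_left]
    rw [this, Submodule.coe_inner]
  have e2 : ⟪a, b⟫_ℂ = ⟪b, b⟫_ℂ := by
    have := Submodule.inner_orthogonalProjection_eq_of_mem_right (K := H) (T h) (N (h : K))
    rw [h1 h] at this
    rw [ha, hb, ← this, ← Submodule.coe_inner]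
  have e3 : ⟪b, a⟫_ℂ = ⟪b, b⟫_ℂ := by
    rw [← inner_conj_symm, e2, inner_conj_symm]
  have key : ⟪a - b, a - b⟫_ℂ = 0 := by
    rw [inner_sub_left, inner_sub_right, inner_sub_right, e1, e2, e3]
    ring
  have hab : a = b := sub_eq_zero.mp (inner_self_eq_zero.mp key)
  exact ⟨hab ▸ (T h).2, hab⟩
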